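/- Let p, λ, t ∈ (0,∞). Then there exists a constant C > 0 (depending only on p, λ, t) such that for every entire function f : ℂ → ℂ and every z ∈ ℂ, |f(z) e^{-(λ/2)|z|²}|^p ≤ C ∫_{B(z,t)} |f(w) e^{-(λ/2)|w|²}|^p dA(w). -/

import Mathlib

open MeasureTheory Metric Real Set

private lemma circle_submean_aux {g : ℂ → ℂ} (hg : Differentiable ℂ g) (z : ℂ) {r : ℝ} (hr : 0 < r) :
    2 * π * ‖g z‖ ≤ ∫ θ in (0:ℝ)..(2*π), ‖g (circleMap z r θ)‖ := by
  have h := (hg.differentiableOn (s := closedBall z r)).circleIntegral_sub_inv_smul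
    (w := z) (mem_ball_self hr)
  have h2 : ‖(2 * π * Complex.I : ℂ) • g z‖ = 2 * π * ‖g z‖ := by
    rw [norm_smul]
    simp [abs_of_pos Real.pi_pos, mul_assoc]
  calc 2 * π * ‖g z‖ = ‖∮ w in C(z, r), (w - z)⁻¹ • g w‖ := by rw [h, h2]
    _ ≤ ∫ θ in (0:ℝ)..(2*π), ‖deriv (circleMap z r) θ • ((circleMap z r θ - z)⁻¹ • g (circleMap z r θ))‖ := by
        apply intervalIntegral.norm_integral_le_integral_norm
        positivity
    _ = ∫ θ in (0:ℝ)..(2*π), ‖g (circleMap z r θ)‖ := by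
        apply intervalIntegral.integral_congr
        intro θ _
        simp only []
        show ‖deriv (circleMap z r) θ • ((circleMap z r θ - z)⁻¹ • g (circleMap z r θ))‖ = ‖g (circleMap z r θ)‖
        rw [deriv_circleMap, norm_smul, norm_smul, circleMap_sub_center, norm_inv]
        have : ‖circleMap 0 r θ‖ = r := by
          simp [abs_of_pos hr]
        simp only [norm_mul, this, Complex.norm_I, mul_one]
        field_simp

private lemma area_submean_aux {g : ℂ → ℂ} (hg : Differentiable ℂ g) (z : ℂ) {t : ℝ} (ht : 0 < t) :
    π * t ^ 2 * ‖g z‖ ≤ ∫ w in ball z t, ‖g w‖ := by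
  set u : ℂ → ℝ := fun w => ‖g (z + w)‖ with hu
  set G : ℝ × ℝ → ℝ := fun q => q.1 * ‖g (z + (q.1 * (Real.cos q.2 + Real.sin q.2 * Complex.I)))‖ with hG
  have hGc : Continuous G := by
    apply continuous_fst.mul
    apply (hg.continuous.comp ?_).norm
    continuity
  set S : Set (ℝ × ℝ) := Ioo (0:ℝ) t ×ˢ Ioo (-π) π with hS
  have hSsub : S ⊆ Icc (0:ℝ) t ×ˢ Icc (-π) π := prod_mono Ioo_subset_Icc_self Ioo_subset_Icc_self
  have hGint : IntegrableOn G S := by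
    apply IntegrableOn.mono_set ?_ hSsub
    exact hGc.continuousOn.integrableOn_compact (isCompact_Icc.prod isCompact_Icc)
  have step1 : ∫ w in ball z t, ‖g w‖ = ∫ w, (ball (0:ℂ) t).indicator u w := by
    rw [← integral_indicator measurableSet_ball]
    rw [← MeasureTheory.integral_add_left_eq_self
      (fun w => (ball z t).indicator (fun w => ‖g w‖) w) z]
    congr 1
    funext w
    simp only [indicator, mem_ball, hu]
    have : dist (z + w) z = dist w 0 := by simp [dist_eq_norm]
    rw [this]
  have step2 : ∫ w, (ball (0:ℂ) t).indicator u w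
      = ∫ p in polarCoord.target, p.1 • (ball (0:ℂ) t).indicator u (Complex.polarCoord.symm p) :=
    (Complex.integral_comp_polarCoord_symm _).symm
  have hSm : MeasurableSet S := (measurableSet_Ioo).prod (measurableSet_Ioo)
  have hSsubT : S ⊆ polarCoord.target := by
    rw [polarCoord_target]
    exact prod_mono Ioo_subset_Ioi_self (subset_refl _)
  have step3 : ∫ p in polarCoord.target, p.1 • (ball (0:ℂ) t).indicator u (Complex.polarCoord.symm p)
      = ∫ p in S, G p := by
    have e1 : ∫ p in polarCoord.target, p.1 • (ball (0:ℂ) t).indicator u (Complex.polarCoord.symm p)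
        = ∫ p in polarCoord.target, S.indicator G p := by
      apply setIntegral_congr_fun polarCoord.open_target.measurableSet
      intro q hq
      rw [polarCoord_target] at hq
      obtain ⟨hq1, hq2⟩ := hq
      have habs : ‖Complex.polarCoord.symm q‖ = q.1 := by
        rw [Complex.norm_polarCoord_symm, abs_of_pos hq1]
      show q.1 • (ball (0:ℂ) t).indicator u (Complex.polarCoord.symm q) = S.indicator G q
      by_cases hqt : q.1 < t
      · have hmem : Complex.polarCoord.symm q ∈ ball (0:ℂ) t := by
          rw [mem_ball, dist_zero_right, habs]; exact hqt
        have hmemS : q ∈ S := ⟨⟨hq1, hqt⟩, hq2⟩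
        rw [indicator_of_mem hmem, indicator_of_mem hmemS]
        simp only [hG, smul_eq_mul, hu]
        congr 3
        rw [Complex.polarCoord_symm_apply]
      · have hmem : Complex.polarCoord.symm q ∉ ball (0:ℂ) t := by
          rw [mem_ball, dist_zero_right, habs]; exact hqt
        have hmemS : q ∉ S := fun h => hqt h.1.2
        rw [indicator_of_notMem hmem, indicator_of_notMem hmemS, smul_zero]
    rw [e1, setIntegral_indicator hSm, Set.inter_eq_self_of_subset_right hSsubT]
  have hGint' : IntegrableOn G S (volume.prod volume) := by
    rwa [← MeasureTheory.Measure.volume_eq_prod]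
  have step4 : ∫ p in S, G p = ∫ r in Ioo (0:ℝ) t, ∫ θ in Ioo (-π) π, G (r, θ) := by
    rw [hS, MeasureTheory.Measure.volume_eq_prod]
    rw [hS] at hGint'
    exact setIntegral_prod G hGint'
  have inner_eq : ∀ r : ℝ, 0 < r → ∫ θ in Ioo (-π) π, G (r, θ)
      = r * ∫ θ in (0:ℝ)..(2*π), ‖g (circleMap z r θ)‖ := by
    intro r hr
    have hGr : ∀ θ : ℝ, G (r, θ) = r * ‖g (circleMap z r θ)‖ := by
      intro θ
      simp [hG, circleMap, Complex.exp_mul_I, Complex.ofReal_cos, Complex.ofReal_sin]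
    calc ∫ θ in Ioo (-π) π, G (r, θ) = ∫ θ in Ioo (-π) π, r * ‖g (circleMap z r θ)‖ := by
          simp_rw [hGr]
      _ = r * ∫ θ in Ioo (-π) π, ‖g (circleMap z r θ)‖ := by rw [integral_const_mul]
      _ = r * ∫ θ in (-π)..π, ‖g (circleMap z r θ)‖ := by
          rw [intervalIntegral.integral_of_le (by linarith [pi_pos] : -π ≤ π),
            integral_Ioc_eq_integral_Ioo]
      _ = r * ∫ θ in (0:ℝ)..(2*π), ‖g (circleMap z r θ)‖ := by
          congr 1
          have hper : Function.Periodic (fun θ => ‖g (circleMap z r θ)‖) (2*π) :=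
            (periodic_circleMap z r).comp fun w => ‖g w‖
          have := hper.intervalIntegral_add_eq (-π) 0
          rw [show -π + 2*π = π by ring, zero_add] at this
          exact this
  have hle : ∀ r ∈ Ioo (0:ℝ) t, 2 * π * ‖g z‖ * r ≤ ∫ θ in Ioo (-π) π, G (r, θ) := by
    intro r hr
    rw [inner_eq r hr.1, mul_comm]
    apply mul_le_mul_of_nonneg_left (circle_submean_aux hg z hr.1) hr.1.le
  have hmarg : IntegrableOn (fun r => ∫ θ in Ioo (-π) π, G (r, θ)) (Ioo (0:ℝ) t) := by
    have h2 := hGint'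
    rw [hS, IntegrableOn, ← Measure.prod_restrict] at h2
    exact h2.integral_prod_left
  have step5 : ∫ r in Ioo (0:ℝ) t, 2 * π * ‖g z‖ * r ≤ ∫ r in Ioo (0:ℝ) t, ∫ θ in Ioo (-π) π, G (r, θ) := by
    apply setIntegral_mono_on ?_ hmarg measurableSet_Ioo hle
    have hc : Continuous fun r : ℝ => 2 * π * ‖g z‖ * r := continuous_const.mul continuous_id
    exact (hc.continuousOn.integrableOn_compact isCompact_Icc).mono_set Ioo_subset_Icc_self
  have step6 : ∫ r in Ioo (0:ℝ) t, 2 * π * ‖g z‖ * r = π * t ^ 2 * ‖g z‖ := by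
    rw [integral_const_mul, ← integral_Ioc_eq_integral_Ioo,
      ← intervalIntegral.integral_of_le ht.le, integral_id]
    ring
  rw [step1, step2, step3, step4, ← step6]
  exact step5

private lemma contIntOn_aux {F : ℂ → ℝ} (hF : Continuous F) (z : ℂ) (t : ℝ) :
    IntegrableOn F (ball z t) :=
  (hF.continuousOn.integrableOn_compact (isCompact_closedBall z t)).mono_set
    ball_subset_closedBall

private lemma pow_submean_aux {p : ℝ} (hp : 0 < p) {t : ℝ} (ht : 0 < t) :
    ∃ C0 : ℝ, 0 < C0 ∧ ∀ g : ℂ → ℂ, Differentiable ℂ g → ∀ z : ℂ,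
      ‖g z‖ ^ p ≤ C0 * ∫ w in ball z t, ‖g w‖ ^ p := by
  have hπt : (0:ℝ) < π * t ^ 2 := by positivity
  rcases le_or_gt p 1 with hp1 | hp1
  · -- case p ≤ 1
    set e : ℝ := 2 / p with he
    have he_pos : 0 < e := by positivity
    refine ⟨4 / (π * t ^ 2) * 2 ^ (e * (1 - p)), by positivity, ?_⟩
    intro g hg z
    set I : ℝ := ∫ w in ball z t, ‖g w‖ ^ p with hI
    have hnormp_cont : Continuous fun w : ℂ => ‖g w‖ ^ p :=
      (hg.continuous.norm).rpow_const (fun _ => Or.inr hp.le)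
    have hI_nonneg : 0 ≤ I :=
      setIntegral_nonneg measurableSet_ball fun w _ => Real.rpow_nonneg (norm_nonneg _) _
    set φ : ℂ → ℝ := fun w => ‖g w‖ * max (t - dist w z) 0 ^ e with hφ
    have hφ_cont : Continuous φ := by
      apply (hg.continuous.norm).mul
      apply Continuous.rpow_const _ (fun _ => Or.inr he_pos.le)
      exact (continuous_const.sub (continuous_id.dist continuous_const)).max continuous_const
    obtain ⟨ζ, hζmem, hζmax⟩ := (isCompact_closedBall z t).exists_isMaxOn
      ⟨z, mem_closedBall_self ht.le⟩ hφ_cont.continuousOn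
    have hφz : φ z = ‖g z‖ * t ^ e := by
      rw [hφ]; simp [dist_self, max_eq_left ht.le]
    rcases eq_or_lt_of_le (by positivity : (0:ℝ) ≤ φ ζ) with hφζ0 | hφζpos
    · -- max is zero: g z = 0
      have hz0 : ‖g z‖ * t ^ e ≤ 0 := by
        rw [← hφz, hφζ0]; exact hζmax (mem_closedBall_self ht.le)
      have : ‖g z‖ = 0 := by
        have hte : 0 < t ^ e := Real.rpow_pos_of_pos ht e
        nlinarith [norm_nonneg (g z)]
      rw [this, Real.zero_rpow hp.ne']
      positivity
    · set M : ℝ := ‖g ζ‖ with hM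
      have hM_pos : 0 < M := by
        by_contra hcon
        push_neg at hcon
        have h0 : M = 0 := le_antisymm hcon (norm_nonneg _)
        have : φ ζ = 0 := by rw [hφ]; simp only [← hM, h0, zero_mul]
        linarith
      have hd_pos : 0 < t - dist ζ z := by
        by_contra hcon
        push_neg at hcon
        have : max (t - dist ζ z) 0 = 0 := max_eq_right hcon
        rw [hφ] at hφζpos
        simp only [this, Real.zero_rpow he_pos.ne', mul_zero] at hφζpos
        exact lt_irrefl _ hφζpos
      set d : ℝ := t - dist ζ z with hdd
      set r : ℝ := d / 2 with hr
      have hr_pos : 0 < r := by positivity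
      have hφζ : φ ζ = M * d ^ e := by
        show ‖g ζ‖ * max (t - dist ζ z) 0 ^ e = M * d ^ e
        rw [max_eq_left hd_pos.le]
      have hsub : ball ζ r ⊆ ball z t := by
        intro w hw
        rw [mem_ball] at hw ⊢
        have := dist_triangle w ζ z
        have : dist w z < r + dist ζ z := by linarith
        rw [hr] at this
        linarith [hr_pos]
      have hkey2 : ∀ w ∈ ball ζ r, r ≤ max (t - dist w z) 0 := by
        intro w hw
        rw [mem_ball] at hw
        have h1 := dist_triangle w ζ z
        have : r ≤ t - dist w z := by rw [hr] at hw ⊢; linarith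
        exact this.trans (le_max_left _ _)
      have hkey3 : ∀ w ∈ ball ζ r, ‖g w‖ ≤ 2 ^ e * M := by
        intro w hw
        have hφw : φ w ≤ φ ζ := hζmax (ball_subset_closedBall (hsub hw))
        rw [hφζ, hφ] at hφw
        have hre : (0:ℝ) < r ^ e := Real.rpow_pos_of_pos hr_pos e
        have h2 : ‖g w‖ * r ^ e ≤ ‖g w‖ * max (t - dist w z) 0 ^ e := by
          apply mul_le_mul_of_nonneg_left _ (norm_nonneg _)
          exact Real.rpow_le_rpow hr_pos.le (hkey2 w hw) he_pos.le
        have hde : d ^ e = 2 ^ e * r ^ e := by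
          have : d = 2 * r := by rw [hr]; ring
          rw [this, Real.mul_rpow (by norm_num) hr_pos.le]
        have h3 : ‖g w‖ * r ^ e ≤ 2 ^ e * M * r ^ e := by
          calc ‖g w‖ * r ^ e ≤ M * d ^ e := le_trans h2 hφw
            _ = 2 ^ e * M * r ^ e := by rw [hde]; ring
        exact le_of_mul_le_mul_right h3 hre
      -- area mean value on ball ζ r
      have hkey4 : π * r ^ 2 * M ≤ ∫ w in ball ζ r, ‖g w‖ := area_submean_aux hg ζ hr_pos
      have hkey5 : ∀ w ∈ ball ζ r, ‖g w‖ ≤ (2 ^ e * M) ^ (1 - p) * ‖g w‖ ^ p := by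
        intro w hw
        have h1 : ‖g w‖ = ‖g w‖ ^ p * ‖g w‖ ^ (1 - p) := by
          rw [← Real.rpow_add' (norm_nonneg _) (by norm_num)]
          rw [show p + (1 - p) = 1 by ring, Real.rpow_one]
        calc ‖g w‖ = ‖g w‖ ^ p * ‖g w‖ ^ (1 - p) := h1
          _ ≤ ‖g w‖ ^ p * (2 ^ e * M) ^ (1 - p) := by
              apply mul_le_mul_of_nonneg_left _ (Real.rpow_nonneg (norm_nonneg _) _)
              exact Real.rpow_le_rpow (norm_nonneg _) (hkey3 w hw) (by linarith)
          _ = (2 ^ e * M) ^ (1 - p) * ‖g w‖ ^ p := mul_comm _ _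
      have hkey6 : ∫ w in ball ζ r, ‖g w‖ ≤ (2 ^ e * M) ^ (1 - p) * ∫ w in ball ζ r, ‖g w‖ ^ p := by
        rw [← integral_const_mul]
        apply setIntegral_mono_on (contIntOn_aux hg.continuous.norm ζ r)
          (contIntOn_aux (continuous_const.mul hnormp_cont) ζ r) measurableSet_ball hkey5
      have hkey7 : ∫ w in ball ζ r, ‖g w‖ ^ p ≤ I := by
        apply setIntegral_mono_set (contIntOn_aux hnormp_cont z t)
          (Filter.Eventually.of_forall fun w => Real.rpow_nonneg (norm_nonneg _) _)
          hsub.eventuallyLE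
      have hIp : 0 ≤ ∫ w in ball ζ r, ‖g w‖ ^ p :=
        setIntegral_nonneg measurableSet_ball fun w _ => Real.rpow_nonneg (norm_nonneg _) _
      have hcomb : π * r ^ 2 * M ≤ (2 ^ e * M) ^ (1 - p) * I := by
        calc π * r ^ 2 * M ≤ ∫ w in ball ζ r, ‖g w‖ := hkey4
          _ ≤ (2 ^ e * M) ^ (1 - p) * ∫ w in ball ζ r, ‖g w‖ ^ p := hkey6
          _ ≤ (2 ^ e * M) ^ (1 - p) * I := by
              apply mul_le_mul_of_nonneg_left hkey7 (Real.rpow_nonneg (by positivity) _)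
      have hMsplit : M = M ^ p * M ^ (1 - p) := by
        rw [← Real.rpow_add hM_pos, show p + (1 - p) = 1 by ring, Real.rpow_one]
      have hpowsplit : (2 ^ e * M) ^ (1 - p) = 2 ^ (e * (1 - p)) * M ^ (1 - p) := by
        rw [Real.mul_rpow (by positivity) hM_pos.le, ← Real.rpow_mul (by norm_num : (0:ℝ) ≤ 2)]
      have hM1p : 0 < M ^ (1 - p) := Real.rpow_pos_of_pos hM_pos _
      have hkey8 : π * r ^ 2 * M ^ p ≤ 2 ^ (e * (1 - p)) * I := by
        apply le_of_mul_le_mul_right _ hM1p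
        calc (π * r ^ 2 * M ^ p) * M ^ (1 - p) = π * r ^ 2 * (M ^ p * M ^ (1 - p)) := by ring
          _ = π * r ^ 2 * M := by rw [← hMsplit]
          _ ≤ (2 ^ e * M) ^ (1 - p) * I := hcomb
          _ = (2 ^ (e * (1 - p)) * I) * M ^ (1 - p) := by rw [hpowsplit]; ring
      have hkey9 : ‖g z‖ * t ^ e ≤ M * d ^ e := by
        rw [← hφz, ← hφζ]
        exact hζmax (mem_closedBall_self ht.le)
      have hkey10 : (‖g z‖ * t ^ e) ^ p ≤ (M * d ^ e) ^ p :=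
        Real.rpow_le_rpow (by positivity) hkey9 hp.le
      have hleft : (‖g z‖ * t ^ e) ^ p = ‖g z‖ ^ p * t ^ 2 := by
        rw [Real.mul_rpow (norm_nonneg _) (by positivity), ← Real.rpow_mul ht.le,
          show e * p = 2 by rw [he]; field_simp,
          show (2:ℝ) = ((2:ℕ):ℝ) by norm_num, Real.rpow_natCast]
      have hright : (M * d ^ e) ^ p = M ^ p * (4 * r ^ 2) := by
        rw [Real.mul_rpow hM_pos.le (by positivity), ← Real.rpow_mul hd_pos.le,
          show e * p = 2 by rw [he]; field_simp,
          show (2:ℝ) = ((2:ℕ):ℝ) by norm_num, Real.rpow_natCast,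
          show d = 2 * r by rw [hr]; ring]
        ring
      rw [hleft, hright] at hkey10
      have hfinal : ‖g z‖ ^ p * t ^ 2 ≤ (4 / π) * (2 ^ (e * (1 - p)) * I) := by
        calc ‖g z‖ ^ p * t ^ 2 ≤ M ^ p * (4 * r ^ 2) := hkey10
          _ = (4 / π) * (π * r ^ 2 * M ^ p) := by field_simp
          _ ≤ (4 / π) * (2 ^ (e * (1 - p)) * I) := by
              apply mul_le_mul_of_nonneg_left hkey8 (by positivity)
      rw [show 4 / (π * t ^ 2) * 2 ^ (e * (1 - p)) * I
          = ((4 / π) * (2 ^ (e * (1 - p)) * I)) / t ^ 2 by field_simp]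
      rw [le_div_iff₀ (by positivity : (0:ℝ) < t ^ 2)]
      exact hfinal
  · -- case p > 1
    set q : ℝ := p / (p - 1) with hq
    have hpq : p.HolderConjugate q := Real.HolderConjugate.conjExponent hp1
    set V : ℝ := (volume (ball (0:ℂ) t)).toReal with hV
    have hVball : ∀ z : ℂ, (volume (ball z t)).toReal = V := by
      intro z
      rw [hV, Measure.addHaar_ball_center]
    have hV_pos : 0 < V := by
      rw [hV, ENNReal.toReal_pos_iff]
      exact ⟨measure_ball_pos _ _ ht, measure_ball_lt_top⟩
    refine ⟨(π * t ^ 2)⁻¹ ^ p * V ^ (p - 1), by positivity, ?_⟩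
    intro g hg z
    set I : ℝ := ∫ w in ball z t, ‖g w‖ ^ p with hI
    have hI_nonneg : 0 ≤ I :=
      setIntegral_nonneg measurableSet_ball fun w _ => Real.rpow_nonneg (norm_nonneg _) _
    have hfin : IsFiniteMeasure (volume.restrict (ball z t)) := by
      constructor
      rw [Measure.restrict_apply_univ]
      exact measure_ball_lt_top
    have hmem : MemLp (fun w => ‖g w‖) (ENNReal.ofReal p) (volume.restrict (ball z t)) := by
      obtain ⟨M, hM⟩ := (isCompact_closedBall z t).exists_bound_of_continuousOn
        (hg.continuous.norm.continuousOn)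
      apply MemLp.of_bound (hg.continuous.norm.aestronglyMeasurable) M
      filter_upwards [ae_restrict_mem measurableSet_ball] with w hw
      exact hM w (ball_subset_closedBall hw)
    have hmem1 : MemLp (fun _ : ℂ => (1:ℝ)) (ENNReal.ofReal q) (volume.restrict (ball z t)) :=
      memLp_const 1
    have holder := integral_mul_le_Lp_mul_Lq_of_nonneg hpq
      (Filter.Eventually.of_forall fun w => norm_nonneg (g w))
      (Filter.Eventually.of_forall fun _ => zero_le_one) hmem hmem1
    simp only [mul_one, Real.one_rpow] at holder
    have hconst : ∫ _ : ℂ in ball z t, (1:ℝ) = V := by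
      rw [setIntegral_const, smul_eq_mul, mul_one, Measure.real, hVball]
    rw [hconst] at holder
    have step1 : π * t ^ 2 * ‖g z‖ ≤ I ^ (1/p) * V ^ (1/q) :=
      (area_submean_aux hg z ht).trans holder
    have step2 : ‖g z‖ ≤ (π * t ^ 2)⁻¹ * (I ^ (1/p) * V ^ (1/q)) := by
      have h2 := mul_le_mul_of_nonneg_left step1 (inv_nonneg.2 hπt.le)
      rwa [← mul_assoc, inv_mul_cancel₀ hπt.ne', one_mul] at h2
    have step3 : ‖g z‖ ^ p ≤ ((π * t ^ 2)⁻¹ * (I ^ (1/p) * V ^ (1/q))) ^ p :=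
      Real.rpow_le_rpow (norm_nonneg _) step2 hp.le
    have step4 : ((π * t ^ 2)⁻¹ * (I ^ (1/p) * V ^ (1/q))) ^ p
        = (π * t ^ 2)⁻¹ ^ p * V ^ (p - 1) * I := by
      rw [Real.mul_rpow (by positivity)
        (mul_nonneg (Real.rpow_nonneg hI_nonneg _) (Real.rpow_nonneg hV_pos.le _)),
        Real.mul_rpow (Real.rpow_nonneg hI_nonneg _) (Real.rpow_nonneg hV_pos.le _),
        ← Real.rpow_mul hI_nonneg, ← Real.rpow_mul hV_pos.le,
        one_div_mul_cancel hp.ne', Real.rpow_one,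
        show 1/q * p = p - 1 by rw [hq]; field_simp]
      ring
    rw [step4] at step3
    exact step3


/-- pointwise estimate for entire functions: for `p, λ, t > 0` there is
`C > 0` (depending only on `p, λ, t`) such that
`|f(z) e^{-(λ/2)|z|²}|^p ≤ C ∫_{B(z,t)} |f(w) e^{-(λ/2)|w|²}|^p dA(w)` for all entire `f`
and all `z ∈ ℂ`. -/
theorem pointwise_estimate_entire (p lam t : ℝ) (hp : 0 < p) (hlam : 0 < lam) (ht : 0 < t) :
    ∃ C : ℝ, 0 < C ∧ ∀ f : ℂ → ℂ, Differentiable ℂ f → ∀ z : ℂ,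
      (‖f z‖ * Real.exp (-(lam / 2) * ‖z‖ ^ 2)) ^ p
        ≤ C * ∫ w in Metric.ball z t, (‖f w‖ * Real.exp (-(lam / 2) * ‖w‖ ^ 2)) ^ p := by
  obtain ⟨C0, hC0, hC0h⟩ := pow_submean_aux hp ht
  refine ⟨C0 * Real.exp (p * ((lam / 2) * t ^ 2)), by positivity, ?_⟩
  intro f hf z
  have hnorm_sq : ∀ v : ℂ, ‖v‖ ^ 2 = v.re ^ 2 + v.im ^ 2 := by
    intro v
    rw [Complex.sq_norm, Complex.normSq_apply]
    ring
  set c : ℂ := -(lam : ℂ) * (starRingEnd ℂ) z with hc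
  set h : ℂ → ℂ := fun w => f w * Complex.exp (c * w) with hh
  have hdiff : Differentiable ℂ h :=
    hf.mul (Complex.differentiable_exp.comp ((differentiable_const c).mul differentiable_id))
  have hkey : ∀ w : ℂ, ‖h w‖ * Real.exp ((lam / 2) * ‖z‖ ^ 2)
      = (‖f w‖ * Real.exp (-(lam / 2) * ‖w‖ ^ 2)) * Real.exp ((lam / 2) * ‖w - z‖ ^ 2) := by
    intro w
    have hcw : (c * w).re = -lam * (z.re * w.re + z.im * w.im) := by
      rw [hc]
      simp [Complex.mul_re, Complex.mul_im, Complex.conj_re, Complex.conj_im]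
      ring
    rw [hh]
    simp only []
    rw [norm_mul, Complex.norm_exp, hcw]
    rw [mul_assoc, ← Real.exp_add, mul_assoc, ← Real.exp_add]
    congr 1
    rw [hnorm_sq, hnorm_sq, hnorm_sq, Complex.sub_re, Complex.sub_im]
    ring
  -- LHS identity
  have hz : ‖f z‖ * Real.exp (-(lam / 2) * ‖z‖ ^ 2) = ‖h z‖ * Real.exp ((lam / 2) * ‖z‖ ^ 2) := by
    have h0 := hkey z
    rw [sub_self, norm_zero] at h0
    have h1 : Real.exp ((lam / 2) * (0:ℝ) ^ 2) = 1 := by norm_num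
    rw [h1, mul_one] at h0
    exact h0.symm
  -- continuity facts
  have hcont1 : Continuous fun w : ℂ => (‖f w‖ * Real.exp (-(lam / 2) * ‖w‖ ^ 2)) ^ p := by
    apply Continuous.rpow_const _ (fun _ => Or.inr hp.le)
    exact (hf.continuous.norm).mul (Real.continuous_exp.comp (by continuity))
  have hcont2 : Continuous fun w : ℂ => ‖h w‖ ^ p :=
    (hdiff.continuous.norm).rpow_const (fun _ => Or.inr hp.le)
  have hE : Real.exp ((lam / 2) * ‖z‖ ^ 2) > 0 := Real.exp_pos _
  -- main chain
  have step1 : (‖f z‖ * Real.exp (-(lam / 2) * ‖z‖ ^ 2)) ^ p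
      = ‖h z‖ ^ p * Real.exp ((lam / 2) * ‖z‖ ^ 2) ^ p := by
    rw [hz, Real.mul_rpow (norm_nonneg _) hE.le]
  have step2 : ‖h z‖ ^ p * Real.exp ((lam / 2) * ‖z‖ ^ 2) ^ p
      ≤ (C0 * ∫ w in ball z t, ‖h w‖ ^ p) * Real.exp ((lam / 2) * ‖z‖ ^ 2) ^ p := by
    apply mul_le_mul_of_nonneg_right (hC0h h hdiff z) (Real.rpow_nonneg hE.le _)
  have step3 : (C0 * ∫ w in ball z t, ‖h w‖ ^ p) * Real.exp ((lam / 2) * ‖z‖ ^ 2) ^ p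
      = C0 * ∫ w in ball z t, (‖h w‖ * Real.exp ((lam / 2) * ‖z‖ ^ 2)) ^ p := by
    rw [mul_assoc, ← integral_mul_const]
    congr 1
    apply setIntegral_congr_fun measurableSet_ball
    intro w _
    show ‖h w‖ ^ p * Real.exp ((lam / 2) * ‖z‖ ^ 2) ^ p
        = (‖h w‖ * Real.exp ((lam / 2) * ‖z‖ ^ 2)) ^ p
    rw [Real.mul_rpow (norm_nonneg _) hE.le]
  have hptb : ∀ w ∈ ball z t, (‖h w‖ * Real.exp ((lam / 2) * ‖z‖ ^ 2)) ^ p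
      ≤ (‖f w‖ * Real.exp (-(lam / 2) * ‖w‖ ^ 2)) ^ p * Real.exp (p * ((lam / 2) * t ^ 2)) := by
    intro w hw
    rw [hkey w, Real.mul_rpow (by positivity) (Real.exp_pos _).le]
    apply mul_le_mul_of_nonneg_left _ (Real.rpow_nonneg (by positivity) _)
    rw [← Real.exp_mul, mul_comm ((lam / 2) * ‖w - z‖ ^ 2) p]
    apply Real.exp_le_exp.2
    have hwz : ‖w - z‖ ≤ t := by
      rw [mem_ball, dist_eq_norm] at hw
      exact hw.le
    have : ‖w - z‖ ^ 2 ≤ t ^ 2 := by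
      apply pow_le_pow_left₀ (norm_nonneg _) hwz
    exact mul_le_mul_of_nonneg_left (mul_le_mul_of_nonneg_left this (by positivity)) hp.le
  have step4 : ∫ w in ball z t, (‖h w‖ * Real.exp ((lam / 2) * ‖z‖ ^ 2)) ^ p
      ≤ ∫ w in ball z t, (‖f w‖ * Real.exp (-(lam / 2) * ‖w‖ ^ 2)) ^ p
          * Real.exp (p * ((lam / 2) * t ^ 2)) := by
    apply setIntegral_mono_on ?_ ?_ measurableSet_ball hptb
    · apply contIntOn_aux _ z t
      apply Continuous.rpow_const _ (fun _ => Or.inr hp.le)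
      exact (hdiff.continuous.norm).mul continuous_const
    · exact contIntOn_aux (hcont1.mul continuous_const) z t
  calc (‖f z‖ * Real.exp (-(lam / 2) * ‖z‖ ^ 2)) ^ p
      = ‖h z‖ ^ p * Real.exp ((lam / 2) * ‖z‖ ^ 2) ^ p := step1
    _ ≤ (C0 * ∫ w in ball z t, ‖h w‖ ^ p) * Real.exp ((lam / 2) * ‖z‖ ^ 2) ^ p := step2
    _ = C0 * ∫ w in ball z t, (‖h w‖ * Real.exp ((lam / 2) * ‖z‖ ^ 2)) ^ p := step3
    _ ≤ C0 * ∫ w in ball z t, (‖f w‖ * Real.exp (-(lam / 2) * ‖w‖ ^ 2)) ^ p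
          * Real.exp (p * ((lam / 2) * t ^ 2)) := by
        exact mul_le_mul_of_nonneg_left step4 hC0.le
    _ = C0 * Real.exp (p * ((lam / 2) * t ^ 2))
          * ∫ w in ball z t, (‖f w‖ * Real.exp (-(lam / 2) * ‖w‖ ^ 2)) ^ p := by
        rw [integral_mul_const]
        ring
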